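/- Let x₁, x₂ ∈ ℝ with x₁ ∈ {0,1} and x₂ ∈ {0,1}, and let X = (1/2) • (x₁, 1, x₂, 1) ∈ ℝ⁴. Then the component of U_nand.mulVec X at index 0 (the amplitude of state |00⟩) equals (x₁ + x₂ - 2)/(2√6), and this amplitude is 0 if and only if x₁ = 1 and x₂ = 1, i.e., if and only if NAND(x₁,x₂) = 0. -/

import Mathlib

noncomputable def Unand : Matrix (Fin 4) (Fin 4) ℝ :=
  !![1 / Real.sqrt 6, 0, 1 / Real.sqrt 6, -2 / Real.sqrt 6;
     1 / Real.sqrt 3, 1 / Real.sqrt 3, -1 / Real.sqrt 3, 0;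
     1 / (3 * Real.sqrt 2), Real.sqrt 2 / 3, 1 / Real.sqrt 2, Real.sqrt 2 / 3;
     2 / 3, -2 / 3, 0, 1 / 3]

theorem Unand_computes_nand
    (x₁ x₂ : ℝ) (h₁ : x₁ = 0 ∨ x₁ = 1) (h₂ : x₂ = 0 ∨ x₂ = 1)
    (X : Fin 4 → ℝ) (hX : X = (1 / 2 : ℝ) • ![x₁, 1, x₂, 1]) :
    Unand.mulVec X 0 = (x₁ + x₂ - 2) / (2 * Real.sqrt 6) ∧
    (Unand.mulVec X 0 = 0 ↔ x₁ = 1 ∧ x₂ = 1) := by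
  have hs : Real.sqrt 6 ≠ 0 := by positivity
  have key : Unand.mulVec X 0 = (x₁ + x₂ - 2) / (2 * Real.sqrt 6) := by
    subst hX
    simp [Unand, Matrix.mulVec, dotProduct, Fin.sum_univ_four]
    field_simp
    ring
  refine ⟨key, ?_⟩
  rw [key, div_eq_zero_iff]
  constructor
  · rintro (h | h)
    · rcases h₁ with rfl | rfl <;> rcases h₂ with rfl | rfl <;> norm_num at h <;> norm_num
    · exact absurd h (by positivity)
  · rintro ⟨rfl, rfl⟩; left; ring
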